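/- arXiv:0807.0454 — 4 statements merged into one kernel-verified Lean document; each statement's English description precedes it below -/
import Mathlib

section
/- For k1 ≥ k2 > 0 and k3 = -k1*k2/(k1+k2), the three numbers k1/(k1+k2), (k2 - sqrt(k1²+k1k2+k2²))/(k1+k2), and (k2 + sqrt(k1²+k1k2+k2²))/(k1+k2) are exactly the roots of the cubic f(ν) = (k1+k2)ν³ - (k1+2k2)ν² - (k1+2k3)ν + (k1+k3), i.e., f factors as (k1+k2) times the product of (ν - r) over these three values r. -/
theorem cubic_factorization (k1 k2 k3 : ℝ)
    (h12 : k1 ≥ k2) (h2 : k2 > 0)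
    (h3 : k3 = -k1 * k2 / (k1 + k2)) :
    ∀ ν : ℝ,
      (k1 + k2) * ν^3 - (k1 + 2*k2) * ν^2 - (k1 + 2*k3) * ν + (k1 + k3)
        = (k1 + k2) * (ν - k1 / (k1 + k2))
          * (ν - (k2 - Real.sqrt (k1^2 + k1*k2 + k2^2)) / (k1 + k2))
          * (ν - (k2 + Real.sqrt (k1^2 + k1*k2 + k2^2)) / (k1 + k2)) := by
  intro ν
  have hs : k1 + k2 > 0 := by linarith
  have hne : k1 + k2 ≠ 0 := ne_of_gt hs
  have hsq : Real.sqrt (k1^2 + k1*k2 + k2^2) ^ 2 = k1^2 + k1*k2 + k2^2 := by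
    apply Real.sq_sqrt; nlinarith
  subst h3
  field_simp
  rw [show k1 * (k1 + k2) + k2 ^ 2 = k1^2 + k1*k2 + k2^2 by ring]
  linear_combination ((k1+k2)*ν - k1) * hsq
end

section
/- For all ν with 0 < ν < 1, one has (2 - ν²)·ν/(1 - ν²) > ln((1+ν)/(1-ν)). -/
open Real Set

noncomputable def gAux (ν : ℝ) : ℝ :=
  (2 - ν^2) * ν / (1 - ν^2) - Real.log (1 + ν) + Real.log (1 - ν)

lemma gAux_hasDeriv (x : ℝ) (h1 : -1 < x) (h2 : x < 1) :
    HasDerivAt gAux ((x^2 + x^4) / (1 - x^2)^2) x := by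
  have hne : 1 - x^2 ≠ 0 := by nlinarith
  have hp : (1:ℝ) + x ≠ 0 := by linarith
  have hm : (1:ℝ) - x ≠ 0 := by linarith
  have hA : HasDerivAt (fun ν : ℝ => (2 - ν^2) * ν) (2 - 3*x^2) x := by
    have h := (((hasDerivAt_pow 2 x).const_sub 2).mul (hasDerivAt_id x))
    exact h.congr_deriv (by simp; ring)
  have hB : HasDerivAt (fun ν : ℝ => 1 - ν^2) (-(2*x)) x := by
    have h := (hasDerivAt_pow 2 x).const_sub 1
    exact h.congr_deriv (by norm_num)
  have hdiv := hA.div hB hne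
  have hlog1 : HasDerivAt (fun ν : ℝ => Real.log (1 + ν)) (1/(1+x)) x := by
    have h := ((hasDerivAt_id x).const_add 1).log hp
    simpa using h
  have hlog2 : HasDerivAt (fun ν : ℝ => Real.log (1 - ν)) (-(1/(1-x))) x := by
    have h := ((hasDerivAt_id x).const_sub 1).log hm
    exact h.congr_deriv (by simp [neg_div])
  have h := (hdiv.sub hlog1).add hlog2
  exact h.congr_deriv (by field_simp; ring)

lemma gAux_mono : StrictMonoOn gAux (Set.Ico 0 1) := by
  apply strictMonoOn_of_deriv_pos (convex_Ico 0 1)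
  · intro x hx
    exact (gAux_hasDeriv x (by linarith [hx.1]) hx.2).continuousAt.continuousWithinAt
  · intro x hx
    rw [interior_Ico] at hx
    rw [(gAux_hasDeriv x (by linarith [hx.1]) hx.2).deriv]
    have h1 : 0 < x := hx.1
    have h2 : x < 1 := hx.2
    exact div_pos (by nlinarith) (pow_pos (by nlinarith) 2)

theorem log_inequality (ν : ℝ) (h0 : 0 < ν) (h1 : ν < 1) :
    (2 - ν^2) * ν / (1 - ν^2) > Real.log ((1 + ν) / (1 - ν)) := by
  have hp : (0:ℝ) < 1 + ν := by linarith
  have hm : (0:ℝ) < 1 - ν := by linarith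
  have h0g : gAux 0 = 0 := by simp [gAux]
  have h := gAux_mono (Set.mem_Ico.mpr ⟨le_refl 0, by norm_num⟩)
      (Set.mem_Ico.mpr ⟨h0.le, h1⟩) h0
  rw [h0g] at h
  have hlog : Real.log ((1 + ν) / (1 - ν)) = Real.log (1 + ν) - Real.log (1 - ν) :=
    Real.log_div hp.ne' hm.ne'
  rw [hlog]
  unfold gAux at h
  linarith
end

section
/- For 0 < ν < 1 and any real k ≥ 1, the expression -ln((1+ν)/(1-ν)) + (2-ν²)ν/(1-ν²) + (k²-1)ν³/(1-ν²) is positive. -/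
noncomputable def gfun (t : ℝ) : ℝ :=
  -(Real.log (1 + t) - Real.log (1 - t)) + (2 - t^2) * t / (1 - t^2)

lemma gfun_hasDeriv (x : ℝ) (hx0 : -1 < x) (hx1 : x < 1) :
    HasDerivAt gfun ((x^2 + x^4) / (1 - x^2)^2) x := by
  have hp : (0:ℝ) < 1 + x := by linarith
  have hm : (0:ℝ) < 1 - x := by linarith
  have hd : (1 - x^2) ≠ 0 := by nlinarith [mul_pos hp hm]
  have h1 : HasDerivAt (fun t : ℝ => Real.log (1 + t)) (1 / (1 + x)) x := by
    have := (Real.hasDerivAt_log hp.ne').comp x ((hasDerivAt_id x).const_add 1)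
    simpa [Function.comp_def] using this
  have h2 : HasDerivAt (fun t : ℝ => Real.log (1 - t)) (-(1 / (1 - x))) x := by
    have := (Real.hasDerivAt_log hm.ne').comp x ((hasDerivAt_id x).const_sub 1)
    simpa [Function.comp_def] using this
  have h3 : HasDerivAt (fun t : ℝ => (2 - t^2) * t) (2 - 3 * x^2) x := by
    have a : HasDerivAt (fun t : ℝ => 2 - t^2) (-(2 * x^1)) x :=
      ((hasDerivAt_pow 2 x).const_sub 2).congr_deriv (by push_cast; ring)
    have := a.mul (hasDerivAt_id x)
    refine this.congr_deriv ?_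
    simp; ring
  have h4 : HasDerivAt (fun t : ℝ => 1 - t^2) (-(2 * x)) x := by
    have := (hasDerivAt_pow 2 x).const_sub 1
    simpa using this
  have hq := h3.div h4 hd
  have := ((h1.sub h2).neg).add hq
  refine this.congr_deriv ?_
  field_simp
  ring

theorem dlogf_positive (ν k : ℝ) (h0 : 0 < ν) (h1 : ν < 1) (hk : 1 ≤ k) :
    0 < -Real.log ((1 + ν) / (1 - ν)) + (2 - ν^2) * ν / (1 - ν^2)
        + (k^2 - 1) * ν^3 / (1 - ν^2) := by
  have hm : (0:ℝ) < 1 - ν := by linarith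
  have hp : (0:ℝ) < 1 + ν := by linarith
  have hd : (0:ℝ) < 1 - ν^2 := by nlinarith
  have mono : StrictMonoOn gfun (Set.Ico (0:ℝ) 1) := by
    apply strictMonoOn_of_deriv_pos (convex_Ico 0 1)
    · intro x hx
      exact (gfun_hasDeriv x (by linarith [hx.1]) hx.2).continuousAt.continuousWithinAt
    · intro x hx
      rw [interior_Ico] at hx
      rw [(gfun_hasDeriv x (by linarith [hx.1]) hx.2).deriv]
      have hx2 : (0:ℝ) < 1 - x^2 := by nlinarith [hx.1, hx.2]
      have hn : (0:ℝ) < x^2 + x^4 := by nlinarith [pow_pos hx.1 2, pow_pos hx.1 4]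
      exact div_pos hn (pow_pos hx2 2)
  have g0 : gfun 0 = 0 := by simp [gfun]
  have hgν : 0 < gfun ν := by
    have := mono (by constructor <;> norm_num) ⟨h0.le, h1⟩ h0
    rwa [g0] at this
  have hlog : Real.log ((1 + ν) / (1 - ν)) = Real.log (1 + ν) - Real.log (1 - ν) :=
    Real.log_div hp.ne' hm.ne'
  have hlast : 0 ≤ (k^2 - 1) * ν^3 / (1 - ν^2) := by
    apply div_nonneg _ hd.le
    have : (0:ℝ) ≤ k^2 - 1 := by nlinarith
    positivity
  have : 0 < -Real.log ((1 + ν) / (1 - ν)) + (2 - ν^2) * ν / (1 - ν^2) := by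
    rw [hlog]
    simpa [gfun] using hgν
  linarith
end

section
/- Define q(k) = sqrt(k² + k + 1) and f(k) = ((q(k)-1)/(q(k)+1))^k · (q(k)+k)/(q(k)-k) for k ≥ 1. Then f(1) = 1 and f is strictly increasing on (1, ∞); in particular f(k) > 1 for all k > 1. -/
open Real

lemma logAux {z : ℝ} (hz : 1 ≤ z) : Real.log z ≤ (z^2 - 1) / (2*z) := by
  have key : ∀ x ∈ Set.Ici (1:ℝ), HasDerivAt (fun t => (t^2-1)/(2*t) - Real.log t)
      ((x-1)^2/(2*x^2)) x := by
    intro x hx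
    have hx0 : (0:ℝ) < x := lt_of_lt_of_le one_pos hx
    have h1 : HasDerivAt (fun t : ℝ => (t^2-1)/(2*t)) ((2*x*(2*x) - (x^2-1)*2)/(2*x)^2) x := by
      exact (((hasDerivAt_pow 2 x).sub_const 1).div
        ((hasDerivAt_id x).const_mul 2) (by positivity)).congr_deriv (by simp)
    have h2 := h1.sub (Real.hasDerivAt_log hx0.ne')
    apply h2.congr_deriv
    field_simp
    ring
  have mono : MonotoneOn (fun t : ℝ => (t^2-1)/(2*t) - Real.log t) (Set.Ici 1) := by
    apply monotoneOn_of_deriv_nonneg (convex_Ici 1)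
    · exact fun x hx => ((key x hx).continuousAt).continuousWithinAt
    · intro x hx
      rw [interior_Ici] at hx
      exact ((key x (Set.Ioi_subset_Ici_self hx)).differentiableAt).differentiableWithinAt
    · intro x hx
      rw [interior_Ici] at hx
      rw [((key x (Set.Ioi_subset_Ici_self hx)).deriv)]
      positivity
  have := mono (Set.self_mem_Ici) hz hz
  simp at this
  linarith [this]


noncomputable def qq (k : ℝ) : ℝ := Real.sqrt (k^2 + k + 1)

noncomputable def GG (k : ℝ) : ℝ :=
  k * (Real.log (qq k - 1) - Real.log (qq k + 1)) + Real.log (qq k + k) - Real.log (qq k - k)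

lemma qq_sq {k : ℝ} (hk : 0 < k) : (qq k)^2 = k^2 + k + 1 :=
  Real.sq_sqrt (by positivity)

lemma qq_pos {k : ℝ} (hk : 0 < k) : 0 < qq k := Real.sqrt_pos.2 (by positivity)

lemma qq_gt_one {k : ℝ} (hk : 0 < k) : 1 < qq k := by
  have h := qq_sq hk
  nlinarith [qq_pos hk]

lemma qq_gt_k {k : ℝ} (hk : 0 < k) : k < qq k := by
  have h := qq_sq hk
  nlinarith [qq_pos hk]

lemma hasDerivAt_qq {k : ℝ} (hk : 0 < k) :
    HasDerivAt qq ((2*k+1) / (2 * qq k)) k := by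
  have hp : HasDerivAt (fun x : ℝ => x^2 + x + 1) (2*k+1) k := by
    have h := ((hasDerivAt_pow 2 k).add (hasDerivAt_id k)).add_const 1
    simpa using h
  have := hp.sqrt (by positivity)
  rw [show qq = fun y => Real.sqrt (y^2 + y + 1) from rfl]
  simpa [qq] using this

lemma hasDerivAt_GG {k : ℝ} (hk : 0 < k) :
    HasDerivAt GG (Real.log (qq k - 1) - Real.log (qq k + 1) + 3 / qq k) k := by
  have hq := hasDerivAt_qq hk
  have hQ1 := qq_gt_one hk
  have hQk := qq_gt_k hk
  have hQ0 := qq_pos hk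
  have hQ2 := qq_sq hk
  set Q := qq k with hQdef
  set D := (2*k+1) / (2*Q) with hDdef
  have hm : Q - 1 ≠ 0 := by linarith
  have hp : Q + 1 ≠ 0 := by linarith
  have hpk : Q + k ≠ 0 := by nlinarith
  have hmk : Q - k ≠ 0 := by nlinarith
  have hQne : Q ≠ 0 := by linarith
  have hk1 : k + 1 ≠ 0 := by positivity
  have hkk : k^2 + k ≠ 0 := by positivity
  have h1 : HasDerivAt (fun k => Real.log (qq k - 1)) (D / (Q - 1)) k :=
    (hq.sub_const 1).log hm
  have h2 : HasDerivAt (fun k => Real.log (qq k + 1)) (D / (Q + 1)) k :=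
    (hq.add_const 1).log hp
  have h3 : HasDerivAt (fun k => Real.log (qq k + k)) ((D + 1) / (Q + k)) k :=
    (hq.add (hasDerivAt_id k)).log (by simpa using hpk)
  have h4 : HasDerivAt (fun k => Real.log (qq k - k)) ((D - 1) / (Q - k)) k :=
    (hq.sub (hasDerivAt_id k)).log (by simpa using hmk)
  have hG : HasDerivAt GG
      (1 * (Real.log (Q - 1) - Real.log (Q + 1)) + k * (D/(Q-1) - D/(Q+1))
        + (D+1)/(Q+k) - (D-1)/(Q-k)) k :=
    (((hasDerivAt_id k).mul (h1.sub h2)).add h3).sub h4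
  apply hG.congr_deriv
  have d1 : (Q-1)*(Q+1) = k^2+k := by linear_combination hQ2
  have d2 : (Q+k)*(Q-k) = k+1 := by linear_combination hQ2
  have e1 : k * (D/(Q-1) - D/(Q+1)) = (2*k+1) / (Q*(k+1)) := by
    rw [div_sub_div _ _ hm hp, d1, show D*(Q+1) - (Q-1)*D = D*2 by ring, hDdef]
    field_simp
  have e2 : (D+1)/(Q+k) - (D-1)/(Q-k) = (k+2)/(Q*(k+1)) := by
    rw [div_sub_div _ _ hpk hmk, d2, show (D+1)*(Q-k) - (Q+k)*(D-1) = 2*Q - 2*D*k by ring,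
      hDdef]
    field_simp
    linear_combination 2 * hQ2
  have e3 : (2*k+1)/(Q*(k+1)) + (k+2)/(Q*(k+1)) = 3/Q := by
    rw [← add_div, show 2*k+1+(k+2) = 3*(k+1) by ring]
    field_simp
  rw [e1]
  linarith [e2, e3]

lemma deriv_GG_pos {k : ℝ} (hk : 1 < k) :
    0 < Real.log (qq k - 1) - Real.log (qq k + 1) + 3 / qq k := by
  have hk0 : (0:ℝ) < k := by linarith
  have hQ1 := qq_gt_one hk0
  have hQ0 := qq_pos hk0
  have hQ2 := qq_sq hk0
  set Q := qq k with hQdef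
  have hQ3 : 3 < Q^2 := by nlinarith
  have hy : 1 ≤ (Q+1)/(Q-1) := by
    rw [le_div_iff₀ (by linarith)]; linarith
  have hlog : Real.log ((Q+1)/(Q-1)) ≤ (((Q+1)/(Q-1))^2 - 1) / (2*((Q+1)/(Q-1))) :=
    logAux hy
  have hsimp : (((Q+1)/(Q-1))^2 - 1) / (2*((Q+1)/(Q-1))) = 2*Q/(Q^2-1) := by
    have h1 : Q - 1 ≠ 0 := by linarith
    have h2 : Q + 1 ≠ 0 := by linarith
    have h3 : Q^2 - 1 ≠ 0 := by nlinarith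
    field_simp
    ring
  have hdiv : Real.log ((Q+1)/(Q-1)) = Real.log (Q+1) - Real.log (Q-1) :=
    Real.log_div (by linarith) (by linarith)
  have hlt : 2*Q/(Q^2-1) < 3/Q := by
    rw [div_lt_div_iff₀ (by nlinarith) hQ0]
    nlinarith
  rw [hsimp, hdiv] at hlog
  linarith

lemma GG_mono : StrictMonoOn GG (Set.Ici (1:ℝ)) := by
  apply strictMonoOn_of_deriv_pos (convex_Ici 1)
  · intro x hx
    exact ((hasDerivAt_GG (lt_of_lt_of_le one_pos hx)).continuousAt).continuousWithinAt
  · intro x hx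
    rw [interior_Ici] at hx
    rw [(hasDerivAt_GG (by linarith [Set.mem_Ioi.1 hx] : (0:ℝ) < x)).deriv]
    exact deriv_GG_pos hx

theorem invariant_ratio_increasing (f : ℝ → ℝ)
    (hf : ∀ k : ℝ, f k =
      ((Real.sqrt (k^2 + k + 1) - 1) / (Real.sqrt (k^2 + k + 1) + 1)) ^ k
        * (Real.sqrt (k^2 + k + 1) + k) / (Real.sqrt (k^2 + k + 1) - k)) :
    f 1 = 1 ∧ StrictMonoOn f (Set.Ioi (1 : ℝ)) ∧ ∀ k : ℝ, 1 < k → 1 < f k := by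
  have hfeq : ∀ k : ℝ, 0 < k → f k = Real.exp (GG k) := by
    intro k hk
    have hQ1 := qq_gt_one hk
    have hQk := qq_gt_k hk
    have hQ0 := qq_pos hk
    have hb : 0 < (qq k - 1)/(qq k + 1) := by
      apply div_pos <;> linarith
    rw [hf k]
    have hq : Real.sqrt (k^2 + k + 1) = qq k := rfl
    rw [hq]
    rw [Real.rpow_def_of_pos hb]
    rw [GG, Real.log_div (by linarith) (by linarith)]
    rw [Real.exp_sub, Real.exp_add, Real.exp_log (by linarith), Real.exp_log (by linarith)]
    ring
  have hf1 : f 1 = 1 := by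
    rw [hf 1]
    have h3 : (1:ℝ)^2 + 1 + 1 = 3 := by norm_num
    rw [h3]
    have hs : 1 < Real.sqrt 3 := by
      rw [show (1:ℝ) = Real.sqrt 1 by simp]
      exact Real.sqrt_lt_sqrt (by norm_num) (by norm_num)
    rw [Real.rpow_one, div_mul_cancel₀ _ (by linarith : Real.sqrt 3 + 1 ≠ 0),
      div_self (by linarith : Real.sqrt 3 - 1 ≠ 0)]
  refine ⟨hf1, ?_, ?_⟩
  · intro a ha b hb hab
    rw [hfeq a (by linarith [Set.mem_Ioi.1 ha]), hfeq b (by linarith [Set.mem_Ioi.1 hb])]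
    exact Real.exp_lt_exp.2 (GG_mono (Set.Ioi_subset_Ici_self ha) (Set.Ioi_subset_Ici_self hb) hab)
  · intro k hk
    have h1 : f 1 = Real.exp (GG 1) := hfeq 1 one_pos
    have hk' : f k = Real.exp (GG k) := hfeq k (by linarith)
    have := GG_mono (Set.self_mem_Ici) (le_of_lt hk : (1:ℝ) ≤ k) hk
    calc (1:ℝ) = f 1 := hf1.symm
    _ = Real.exp (GG 1) := h1
    _ < Real.exp (GG k) := Real.exp_lt_exp.2 this
    _ = f k := hk'.symm
end
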